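/- For the Bethe tree B_{d,k} with d ≥ 3 and k ≥ 1, the graph energy equals ∑_{j=1}^{k-1} f_j·(d-1)^{k-1/2-j}, where f_j = 2·csc(π/(2j+4)) - 2·cot(π/(2j+2)) if j is odd, and f_j = 2·cot(π/(2j+4)) - 2·csc(π/(2j+2)) if j is even. -/

import Mathlib

open Polynomial

/-- A rooted tree on the vertex set `Fin (n+1)`, encoded by a parent function:
the root is `0`, and every non-root vertex has a parent strictly smaller than
itself (which guarantees acyclicity and connectedness). -/
structure ParentTree (n : ℕ) where
  parent : Fin (n + 1) → Fin (n + 1)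
  parent_lt : ∀ i : Fin (n + 1), i ≠ 0 → parent i < i
  parent_zero : parent 0 = 0

namespace ParentTree

variable {n : ℕ}

/-- The set of children of a vertex. -/
def children (T : ParentTree n) (v : Fin (n + 1)) : Finset (Fin (n + 1)) :=
  Finset.univ.filter fun w => T.parent w = v ∧ w ≠ v

/-- The adjacency matrix of a rooted tree, with entries in `R`. -/
def adjMat (T : ParentTree n) (R : Type) [Zero R] [One R] :
    Matrix (Fin (n + 1)) (Fin (n + 1)) R :=
  Matrix.of fun i j => if i ≠ j ∧ (T.parent i = j ∨ T.parent j = i) then 1 else 0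

/-- The degree of a vertex. -/
def deg (T : ParentTree n) (v : Fin (n + 1)) : ℕ :=
  (T.children v).card + if v = 0 then 0 else 1

end ParentTree

set_option maxHeartbeats 1000000
section B14aux
open Real
namespace B14

/-- Dickson polynomials of the second kind with parameter c+2. -/
noncomputable def eP (c : ℕ) : ℕ → ℝ[X]
  | 0 => 1
  | 1 => X
  | (j+2) => X * eP c (j+1) - C ((c:ℝ) + 2) * eP c j

/-- Characteristic polynomials of Bethe subtrees, d = c+3. -/
noncomputable def aP (c : ℕ) : ℕ → ℝ[X]
  | 0 => 1
  | 1 => X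
  | (j+2) => X * aP c (j+1) ^ (c+2) - C ((c:ℝ) + 2) * aP c j ^ (c+2) * aP c (j+1) ^ (c+1)

lemma eP_monic_natDegree (c : ℕ) : ∀ j, (eP c j).Monic ∧ (eP c j).natDegree = j := by
  have key : ∀ j, ((eP c j).Monic ∧ (eP c j).natDegree = j) ∧
      ((eP c (j+1)).Monic ∧ (eP c (j+1)).natDegree = j+1) := by
    intro j
    induction j with
    | zero => exact ⟨⟨monic_one, natDegree_one⟩, ⟨monic_X, natDegree_X⟩⟩
    | succ m ih =>
      obtain ⟨⟨h0, h0d⟩, ⟨h1, h1d⟩⟩ := ih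
      refine ⟨⟨h1, h1d⟩, ?_⟩
      have hXe : (X * eP c (m+1)).Monic := monic_X.mul h1
      have hXed : (X * eP c (m+1)).natDegree = m + 2 := by
        rw [natDegree_mul X_ne_zero h1.ne_zero, natDegree_X, h1d]; omega
      have hXedeg : (X * eP c (m+1)).degree = ((m + 2 : ℕ) : WithBot ℕ) := by
        rw [degree_eq_natDegree hXe.ne_zero, hXed]
      have hdeg : (C ((c:ℝ) + 2) * eP c m).degree < (X * eP c (m+1)).degree := by
        refine ((degree_mul_le _ _).trans (add_le_add degree_C_le degree_le_natDegree)).trans_lt ?_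
        rw [h0d, hXedeg, zero_add]
        exact_mod_cast by omega
      have hm : (eP c (m+2)).Monic := by
        simp only [eP]; exact hXe.sub_of_left hdeg
      refine ⟨hm, ?_⟩
      have : (eP c (m+2)).degree = ((m+2 : ℕ) : WithBot ℕ) := by
        simp only [eP]
        rw [degree_sub_eq_left_of_degree_lt hdeg, hXedeg]
      exact natDegree_eq_of_degree_eq_some this
  exact fun j => (key j).1

lemma eP_monic (c : ℕ) (j : ℕ) : (eP c j).Monic := (eP_monic_natDegree c j).1
lemma eP_natDegree (c : ℕ) (j : ℕ) : (eP c j).natDegree = j := (eP_monic_natDegree c j).2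

/-- Evaluation identity, Chebyshev-U style. -/
lemma eP_eval_cos (c : ℕ) : ∀ j, ∀ θ : ℝ,
    (eP c j).eval (2 * Real.sqrt (c+2) * Real.cos θ) * Real.sin θ
      = Real.sqrt (c+2) ^ j * Real.sin (((j:ℝ)+1) * θ) := by
  have hb : (0:ℝ) ≤ (c:ℝ) + 2 := by positivity
  have hsq : Real.sqrt (c+2) ^ 2 = (c:ℝ) + 2 := Real.sq_sqrt hb
  have key : ∀ j, (∀ θ : ℝ, (eP c j).eval (2 * Real.sqrt (c+2) * Real.cos θ) * Real.sin θ
      = Real.sqrt (c+2) ^ j * Real.sin (((j:ℝ)+1) * θ)) ∧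
      (∀ θ : ℝ, (eP c (j+1)).eval (2 * Real.sqrt (c+2) * Real.cos θ) * Real.sin θ
      = Real.sqrt (c+2) ^ (j+1) * Real.sin (((j:ℝ)+2) * θ)) := by
    intro j
    induction j with
    | zero =>
      constructor
      · intro θ; simp [eP]
      · intro θ
        simp only [eP, eval_X, pow_one]
        norm_num
        rw [show ((2:ℝ)) * θ = θ + θ by ring, Real.sin_add]
        ring
    | succ m ih =>
      obtain ⟨ih0, ih1⟩ := ih
      constructor
      · intro θ
        rw [ih1 θ]; push_cast; ring_nf
      · intro θ
        have e0 := ih0 θ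
        have e1 := ih1 θ
        simp only [eP, eval_sub, eval_mul, eval_X, eval_C]
        have trig : 2 * Real.cos θ * Real.sin (((m:ℝ)+2) * θ) =
            Real.sin (((m:ℝ)+3) * θ) + Real.sin (((m:ℝ)+1) * θ) := by
          have h1 : ((m:ℝ)+3) * θ = ((m:ℝ)+2) * θ + θ := by ring
          have h2 : ((m:ℝ)+1) * θ = ((m:ℝ)+2) * θ - θ := by ring
          rw [h1, h2, Real.sin_add, Real.sin_sub]; ring
        have expand : (2 * Real.sqrt (c+2) * Real.cos θ * (eP c (m+1)).eval (2 * Real.sqrt (c+2) * Real.cos θ)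
            - ((c:ℝ)+2) * (eP c m).eval (2 * Real.sqrt (c+2) * Real.cos θ)) * Real.sin θ
            = 2 * Real.sqrt (c+2) * Real.cos θ * (Real.sqrt (c+2) ^ (m+1) * Real.sin (((m:ℝ)+2) * θ))
              - ((c:ℝ)+2) * (Real.sqrt (c+2) ^ m * Real.sin (((m:ℝ)+1) * θ)) := by
          rw [← e0, ← e1]; ring
        rw [show (2 * Real.sqrt (↑c+2) * Real.cos θ * eval (2 * Real.sqrt (↑c+2) * Real.cos θ) (eP c (m+1))
            - (↑c+2) * eval (2 * Real.sqrt (↑c+2) * Real.cos θ) (eP c m)) * Real.sin θ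
            = (2 * Real.sqrt (↑c+2) * Real.cos θ * (eP c (m+1)).eval (2 * Real.sqrt (↑c+2) * Real.cos θ)
            - ((c:ℝ)+2) * (eP c m).eval (2 * Real.sqrt (↑c+2) * Real.cos θ)) * Real.sin θ by ring,
          expand]
        rw [show (2:ℝ) * Real.sqrt (↑c+2) * Real.cos θ * (Real.sqrt (↑c+2) ^ (m+1) * Real.sin (((m:ℝ)+2) * θ))
            = Real.sqrt (↑c+2) ^ 2 * Real.sqrt (↑c+2) ^ m * (2 * Real.cos θ * Real.sin (((m:ℝ)+2)*θ)) by ring,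
          hsq, trig]
        push_cast
        ring_nf
        rw [Real.sq_sqrt (by positivity : (0:ℝ) ≤ 2 + (c:ℝ))]
        ring
  exact fun j => (key j).1

lemma aP_factor (c : ℕ) : ∀ j,
    aP c (j+1) = eP c (j+1) * ∏ i ∈ Finset.Icc 1 j, eP c i ^ ((c+1)*(c+2)^(j-i)) := by
  have key : ∀ j,
      (aP c (j+1) = eP c (j+1) * ∏ i ∈ Finset.Icc 1 j, eP c i ^ ((c+1)*(c+2)^(j-i))) ∧
      (aP c (j+1+1) = eP c (j+1+1) * ∏ i ∈ Finset.Icc 1 (j+1), eP c i ^ ((c+1)*(c+2)^(j+1-i))) := by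
    intro j
    induction j with
    | zero =>
      constructor
      · simp [aP, eP]
      · rw [show (0+1+1) = 2 by rfl]
        rw [Finset.prod_Icc_succ_top (by norm_num), show (0+1) = 1 by rfl]
        simp only [aP, eP]
        norm_num
        ring
    | succ m ih =>
      obtain ⟨Pm, Pm1⟩ := ih
      refine ⟨Pm1, ?_⟩
      set R := ∏ i ∈ Finset.Icc 1 m, eP c i ^ ((c+1)*(c+2)^(m+1-i)) with hR
      have hA : aP c (m+1+1) = eP c (m+1+1) * (R * eP c (m+1) ^ (c+1)) := by
        rw [Pm1, Finset.prod_Icc_succ_top (by omega)]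
        congr 2
        simp
      have hQ : aP c (m+1) ^ (c+2) = eP c (m+1) ^ (c+2) * R := by
        rw [Pm, mul_pow, ← Finset.prod_pow]
        congr 1
        refine Finset.prod_congr rfl fun i hi => ?_
        rw [Finset.mem_Icc] at hi
        rw [← pow_mul]
        congr 1
        have h1 : m + 1 - i = (m - i) + 1 := by omega
        rw [h1, pow_succ]; ring
      have hRHS : (∏ i ∈ Finset.Icc 1 (m+1+1), eP c i ^ ((c+1)*(c+2)^(m+1+1-i)))
          = R ^ (c+2) * eP c (m+1) ^ ((c+1)*(c+2)) * eP c (m+1+1) ^ (c+1) := by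
        rw [Finset.prod_Icc_succ_top (by omega), Finset.prod_Icc_succ_top (by omega)]
        have e1 : m+1+1-(m+1+1) = 0 := by omega
        have e2 : m+1+1-(m+1) = 1 := by omega
        rw [e1, e2, pow_zero, pow_one, mul_one]
        congr 2
        rw [hR, ← Finset.prod_pow]
        refine Finset.prod_congr rfl fun i hi => ?_
        rw [Finset.mem_Icc] at hi
        rw [← pow_mul]
        congr 1
        have h1 : m + 1 + 1 - i = (m + 1 - i) + 1 := by omega
        rw [h1, pow_succ]; ring
      have hunf : aP c (m+1+1+1) = X * aP c (m+1+1) ^ (c+2)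
          - C ((c:ℝ) + 2) * aP c (m+1) ^ (c+2) * aP c (m+1+1) ^ (c+1) := rfl
      have hunf2 : eP c (m+1+1+1) = X * eP c (m+1+1) - C ((c:ℝ) + 2) * eP c (m+1) := rfl
      rw [hunf, hunf2, hRHS, hA, hQ]
      ring
  exact fun j => (key j).1

lemma aP_monic (c : ℕ) (j : ℕ) (he : ∀ i, (eP c i).Monic) : (aP c j).Monic := by
  cases j with
  | zero => exact monic_one
  | succ m =>
    rw [aP_factor]
    exact (he _).mul (monic_prod_of_monic _ _ fun i _ => (he i).pow _)

noncomputable def rootF (c j : ℕ) (h : ℕ) : ℝ :=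
  2 * Real.sqrt ((c:ℝ)+2) * Real.cos ((h:ℝ) * Real.pi / ((j:ℝ)+1))

lemma rootF_injOn (c j : ℕ) : Set.InjOn (rootF c j) (Finset.Icc 1 j) := by
  intro h1 hm1 h2 hm2 heq
  simp only [Finset.coe_Icc, Set.mem_Icc] at hm1 hm2
  have hb : (0:ℝ) < Real.sqrt ((c:ℝ)+2) := Real.sqrt_pos.2 (by positivity)
  have hcos : Real.cos ((h1:ℝ) * Real.pi / ((j:ℝ)+1)) = Real.cos ((h2:ℝ) * Real.pi / ((j:ℝ)+1)) := by
    have := heq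
    unfold rootF at this
    field_simp at this
    rw [show Real.pi * (h2:ℝ) = (h2:ℝ) * Real.pi by ring] at this
    linarith [this]
  have hmem : ∀ h : ℕ, h ≤ j → (h:ℝ) * Real.pi / ((j:ℝ)+1) ∈ Set.Icc 0 Real.pi := by
    intro h hh
    constructor
    · positivity
    · rw [div_le_iff₀ (by positivity)]
      have : (h:ℝ) ≤ (j:ℝ) := by exact_mod_cast hh
      nlinarith [Real.pi_pos]
  have := Real.injOn_cos (hmem h1 hm1.2) (hmem h2 hm2.2) hcos
  field_simp at this
  exact_mod_cast this

lemma eP_roots (c j : ℕ) :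
    (eP c j).roots = (Finset.Icc 1 j).val.map (rootF c j) := by
  classical
  set s : Finset ℝ := (Finset.Icc 1 j).image (rootF c j) with hs
  have hinj := rootF_injOn c j
  have hsval : s.val = (Finset.Icc 1 j).val.map (rootF c j) :=
    Finset.image_val_of_injOn hinj
  have hne : eP c j ≠ 0 := (eP_monic c j).ne_zero
  have hroot : ∀ a ∈ s, IsRoot (eP c j) a := by
    intro a ha
    rw [hs, Finset.mem_image] at ha
    obtain ⟨h, hh, rfl⟩ := ha
    rw [Finset.mem_Icc] at hh
    set θ := (h:ℝ) * Real.pi / ((j:ℝ)+1) with hθ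
    have hθpos : 0 < θ := by
      rw [hθ]
      have : (1:ℝ) ≤ (h:ℝ) := by exact_mod_cast hh.1
      positivity
    have hθlt : θ < Real.pi := by
      rw [hθ, div_lt_iff₀ (by positivity)]
      have : (h:ℝ) ≤ (j:ℝ) := by exact_mod_cast hh.2
      nlinarith [Real.pi_pos]
    have hsin : Real.sin θ ≠ 0 := (Real.sin_pos_of_pos_of_lt_pi hθpos hθlt).ne'
    have := eP_eval_cos c j θ
    have hzero : Real.sin (((j:ℝ)+1) * θ) = 0 := by
      rw [hθ, show ((j:ℝ)+1) * ((h:ℝ) * Real.pi / ((j:ℝ)+1)) = (h:ℝ) * Real.pi by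
        field_simp]
      exact Real.sin_nat_mul_pi h
    rw [hzero, mul_zero] at this
    have : (eP c j).eval (2 * Real.sqrt (↑c+2) * Real.cos θ) = 0 :=
      (mul_eq_zero.1 this).resolve_right hsin
    exact this
  have hle : s.val ≤ (eP c j).roots := by
    rw [Multiset.le_iff_count]
    intro a
    by_cases ha : a ∈ s
    · rw [Multiset.count_eq_one_of_mem s.nodup ha]
      exact Multiset.one_le_count_iff_mem.2 ((mem_roots hne).2 (hroot a ha))
    · rw [Multiset.count_eq_zero_of_notMem ha]
      exact Nat.zero_le _
  have hcard : Multiset.card (eP c j).roots ≤ Multiset.card s.val := by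
    refine (Polynomial.card_roots' _).trans ?_
    rw [eP_natDegree, hsval, Multiset.card_map]
    simp
  rw [← Multiset.eq_of_le_of_card_le hle hcard, hsval]

noncomputable def Sc (j : ℕ) : ℝ :=
  ∑ h ∈ Finset.Icc 1 j, |Real.cos ((h:ℝ) * Real.pi / ((j:ℝ)+1))|

lemma sum_cos (θ : ℝ) : ∀ m : ℕ,
    (∑ h ∈ Finset.Icc 1 m, Real.cos ((h:ℝ)*θ)) * (2 * Real.sin (θ/2))
      = Real.sin ((2*(m:ℝ)+1)*θ/2) - Real.sin (θ/2) := by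
  intro m
  induction m with
  | zero => simp
  | succ m ih =>
    rw [Finset.sum_Icc_succ_top (by omega), add_mul, ih]
    have key : Real.cos (((m:ℝ)+1)*θ) * (2 * Real.sin (θ/2))
        = Real.sin ((2*((m:ℝ)+1)+1)*θ/2) - Real.sin ((2*(m:ℝ)+1)*θ/2) := by
      have h1 : (2*((m:ℝ)+1)+1)*θ/2 = ((m:ℝ)+1)*θ + θ/2 := by ring
      have h2 : (2*(m:ℝ)+1)*θ/2 = ((m:ℝ)+1)*θ - θ/2 := by ring
      rw [h1, h2, Real.sin_add, Real.sin_sub]; ring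
    push_cast
    push_cast at key
    linarith [key]

lemma Sc_one : Sc 1 = 0 := by
  unfold Sc
  rw [show Finset.Icc 1 1 = {1} from rfl, Finset.sum_singleton]
  norm_num

lemma Sc_closed (j : ℕ) (hj : 1 ≤ j) :
    Sc j = (if Odd j then Real.cot (Real.pi/(2*(j:ℝ)+2))
      else (Real.sin (Real.pi/(2*(j:ℝ)+2)))⁻¹) - 1 := by
  set θ : ℝ := Real.pi / ((j:ℝ)+1) with hθdef
  have hjpos : (0:ℝ) < (j:ℝ) + 1 := by positivity
  have hθpos : 0 < θ := by rw [hθdef]; positivity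
  have hθltpi : θ/2 < Real.pi := by
    rw [hθdef]
    rw [div_lt_iff₀ (by norm_num : (0:ℝ) < 2)] at *
    rw [div_lt_iff₀ hjpos]
    nlinarith [Real.pi_pos, (by exact_mod_cast hj : (1:ℝ) ≤ (j:ℝ))]
  have hsinpos : 0 < Real.sin (θ/2) := by
    apply Real.sin_pos_of_pos_of_lt_pi (by linarith) hθltpi
  set m := j / 2 with hm
  have hsplit : Sc j = (∑ h ∈ Finset.Icc 1 m, |Real.cos ((h:ℝ)*θ)|)
      + (∑ h ∈ Finset.Icc (m+1) j, |Real.cos ((h:ℝ)*θ)|) := by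
    unfold Sc
    rw [← Finset.sum_union (by
      rw [Finset.disjoint_left]
      intro a ha hb
      rw [Finset.mem_Icc] at ha hb
      omega)]
    apply Finset.sum_congr
    · ext a; rw [Finset.mem_union, Finset.mem_Icc, Finset.mem_Icc, Finset.mem_Icc]; omega
    · intro h _; rw [hθdef]; ring_nf
  have hrefl : (∑ h ∈ Finset.Icc (m+1) j, |Real.cos ((h:ℝ)*θ)|)
      = ∑ h ∈ Finset.Icc 1 (j - m), |Real.cos ((h:ℝ)*θ)| := by
    apply Finset.sum_nbij' (i := fun h => j + 1 - h) (j := fun h => j + 1 - h)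
    · intro a ha; rw [Finset.mem_Icc] at ha ⊢; omega
    · intro a ha; rw [Finset.mem_Icc] at ha ⊢; omega
    · intro a ha; rw [Finset.mem_Icc] at ha; omega
    · intro a ha; rw [Finset.mem_Icc] at ha; omega
    · intro a ha
      rw [Finset.mem_Icc] at ha
      have hcast : ((j + 1 - a : ℕ) : ℝ) = (j:ℝ) + 1 - (a:ℝ) := by
        have h1 : a ≤ j + 1 := by omega
        push_cast [Nat.cast_sub h1]
        ring
      rw [hcast, show ((j:ℝ) + 1 - (a:ℝ)) * θ = Real.pi - (a:ℝ)*θ by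
        rw [hθdef]; field_simp]
      rw [Real.cos_pi_sub, abs_neg]
  have hcosnn : ∀ h ∈ Finset.Icc 1 m, |Real.cos ((h:ℝ)*θ)| = Real.cos ((h:ℝ)*θ) := by
    intro h hh
    rw [Finset.mem_Icc] at hh
    apply abs_of_nonneg
    apply Real.cos_nonneg_of_mem_Icc
    have h2h : 2*(h:ℝ) ≤ (j:ℝ) := by exact_mod_cast (by omega : 2*h ≤ j)
    constructor
    · have h0 : (0:ℝ) ≤ (h:ℝ) * θ := by positivity
      have := Real.pi_pos
      simp only [neg_le]
      calc -((h:ℝ)*θ) ≤ 0 := by linarith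
      _ ≤ Real.pi / 2 := by positivity
    · rw [hθdef, show (h:ℝ) * (Real.pi/((j:ℝ)+1)) = (h:ℝ)*Real.pi/((j:ℝ)+1) by ring,
        div_le_div_iff₀ hjpos (by norm_num : (0:ℝ) < 2)]
      nlinarith [Real.pi_pos]
  have hθ2 : θ/2 = Real.pi/(2*(j:ℝ)+2) := by
    rw [hθdef, div_div]
    congr 1
    ring
  rw [hsplit, hrefl]
  rcases Nat.even_or_odd j with he | ho
  · obtain ⟨t, ht⟩ := he
    have hjm : j - m = m := by omega
    rw [hjm, Finset.sum_congr rfl hcosnn]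
    have hsum := sum_cos θ m
    have hangle : (2*(m:ℝ)+1)*θ/2 = Real.pi/2 := by
      have hje : (j:ℝ) = 2*(m:ℝ) := by exact_mod_cast (by omega : j = 2*m)
      have hne : (2*(m:ℝ)+1) ≠ 0 := by positivity
      rw [hθdef, hje]
      field_simp
    rw [hangle, Real.sin_pi_div_two] at hsum
    have hif : ¬ Odd j := by rw [Nat.not_odd_iff_even]; exact ⟨t, ht⟩
    rw [if_neg hif, ← hθ2]
    have h2 : (∑ h ∈ Finset.Icc 1 m, Real.cos ((h:ℝ)*θ)) = (1 - Real.sin (θ/2))/(2*Real.sin (θ/2)) := by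
      rw [eq_div_iff (by positivity)]
      linarith [hsum]
    rw [h2]
    field_simp
    ring
  · obtain ⟨t, ht⟩ := ho
    have hjm : j - m = m + 1 := by omega
    have hmid : |Real.cos (((m:ℝ)+1)*θ)| = 0 := by
      rw [show ((m:ℝ)+1)*θ = Real.pi/2 by
        have hje : (j:ℝ) = 2*(m:ℝ)+1 := by exact_mod_cast (by omega : j = 2*m+1)
        have hne : (2*(m:ℝ)+1+1) ≠ 0 := by positivity
        rw [hθdef, hje]
        field_simp
        ring]
      simp
    rw [hjm, Finset.sum_Icc_succ_top (by omega)]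
    rw [show ((m+1 : ℕ):ℝ) = (m:ℝ)+1 by push_cast; ring, hmid, add_zero,
      Finset.sum_congr rfl hcosnn]
    have hsum := sum_cos θ m
    have hangle : (2*(m:ℝ)+1)*θ/2 = Real.pi/2 - θ/2 := by
      have hje : (j:ℝ) = 2*(m:ℝ)+1 := by exact_mod_cast (by omega : j = 2*m+1)
      have hne : (2*(m:ℝ)+1+1) ≠ 0 := by positivity
      rw [hθdef, hje]
      field_simp
      ring
    rw [hangle, Real.sin_pi_div_two_sub] at hsum
    have hif : Odd j := ⟨t, ht⟩
    rw [if_pos hif, ← hθ2, Real.cot_eq_cos_div_sin]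
    have h2 : (∑ h ∈ Finset.Icc 1 m, Real.cos ((h:ℝ)*θ)) = (Real.cos (θ/2) - Real.sin (θ/2))/(2*Real.sin (θ/2)) := by
      rw [eq_div_iff (by positivity)]
      linarith [hsum]
    rw [h2]
    field_simp
    ring

variable {n : ℕ} (T : ParentTree n)

lemma mem_children {v w : Fin (n+1)} : w ∈ T.children v ↔ T.parent w = v ∧ w ≠ v := by
  simp [ParentTree.children]

lemma child_ne_zero {v w : Fin (n+1)} (hw : w ∈ T.children v) : w ≠ 0 := by
  rw [mem_children] at hw
  rintro rfl
  exact hw.2 (by rw [← T.parent_zero, hw.1])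

section Charpoly

variable (lvl : Fin (n + 1) → ℕ)
    (hlvl0 : lvl 0 = 1)
    (hlvl : ∀ v, v ≠ 0 → lvl v = lvl (T.parent v) + 1)
    (c k : ℕ) (hk : 1 ≤ k)
    (hle : ∀ v, lvl v ≤ k)
    (hbethe : ∀ v, lvl v < k → (T.children v).card = c + 2)
    (hleaf : ∀ v, lvl v = k → (T.children v).card = 0)

include hlvl0 hlvl hk hle hbethe hleaf

lemma lvl_pos : ∀ v, 1 ≤ lvl v := by
  intro v
  by_cases hv : v = 0
  · rw [hv, hlvl0]
  · rw [hlvl v hv]; omega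

lemma charpoly_det_eq (x : ℝ) (hx : ∀ j, j ≤ k → (aP c j).eval x ≠ 0) :
    ((x • (1 : Matrix (Fin (n+1)) (Fin (n+1)) ℝ)) - T.adjMat ℝ).det = (aP c k).eval x := by
  classical
  set A : ℕ → ℝ := fun j => (aP c j).eval x with hA
  set ht : Fin (n+1) → ℕ := fun v => k - lvl v with hht
  set g : Fin (n+1) → ℝ := fun v => A (ht v + 1) / (A (ht v))^(c+2) with hg
  have hlp := lvl_pos T lvl hlvl0 hlvl c k hk hle hbethe hleaf
  have hht_le : ∀ v, ht v + 1 ≤ k := by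
    intro v; have := hlp v; have := hle v; simp only [hht]; omega
  have hA0 : A 0 = 1 := by simp [hA, aP]
  have hA1 : A 1 = x := by simp [hA, aP]
  have hAne : ∀ j, j ≤ k → A j ≠ 0 := fun j hj => hx j hj
  have hgne : ∀ v, g v ≠ 0 := by
    intro v
    apply div_ne_zero (hAne _ (hht_le v))
    exact pow_ne_zero _ (hAne _ (by have := hht_le v; omega))
  -- children level facts
  have hchild_lvl : ∀ v w, w ∈ T.children v → lvl w = lvl v + 1 := by
    intro v w hw
    have hw0 := child_ne_zero T hw
    rw [mem_children] at hw
    rw [hlvl w hw0, hw.1]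
  -- the defining equation of g
  have hgeq : ∀ v, g v = x - ∑ w ∈ T.children v, (g w)⁻¹ := by
    intro v
    rcases eq_or_lt_of_le (hle v) with hv | hv
    · -- leaf
      have hc : T.children v = ∅ := Finset.card_eq_zero.1 (hleaf v hv)
      have hhtv : ht v = 0 := by simp only [hht]; omega
      rw [hc, Finset.sum_empty, sub_zero, hg]
      simp only [hhtv, hA0, one_pow, div_one, zero_add, hA1]
    · -- internal
      have hcard : (T.children v).card = c + 2 := hbethe v hv
      have hhtv : 1 ≤ ht v := by simp only [hht]; omega
      obtain ⟨s, hs⟩ : ∃ s, ht v = s + 1 := ⟨ht v - 1, by omega⟩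
      have hconst : ∀ w ∈ T.children v, (g w)⁻¹ = (A s)^(c+2) / A (s+1) := by
        intro w hw
        have : ht w = s := by
          have := hchild_lvl v w hw
          simp only [hht] at hs ⊢
          omega
        rw [hg]
        simp only [this, hs]
        rw [inv_div]
      rw [Finset.sum_congr rfl hconst, Finset.sum_const, hcard]
      have hgv : g v = A (s+1+1) / A (s+1) ^ (c+2) := by simp only [hg, hs]
      rw [hgv]
      have hrec : A (s+2) = x * A (s+1) ^ (c+2) - ((c:ℝ)+2) * A s ^ (c+2) * A (s+1) ^ (c+1) := by
        simp [hA, aP]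
      have h1 : A (s+1) ≠ 0 := hAne _ (by simp only [hht] at hs; omega)
      have h0 : A s ≠ 0 := hAne _ (by simp only [hht] at hs; omega)
      rw [nsmul_eq_mul]
      field_simp
      rw [hrec]
      push_cast
      ring
  -- the L matrix
  set L : Matrix (Fin (n+1)) (Fin (n+1)) ℝ :=
    Matrix.of (fun i j => if i = j then 1 else if T.parent i = j then -(g i)⁻¹ else 0) with hL
  have hLdet : L.det = 1 := by
    have htri : L.BlockTriangular ⇑OrderDual.toDual := by
      intro i j hij
      have hij' : i < j := hij
      have hne : i ≠ j := ne_of_lt hij'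
      have hpar : T.parent i ≠ j := by
        by_cases hi : i = 0
        · rw [hi, T.parent_zero]
          exact fun h => (Fin.pos_iff_ne_zero.2 (by rintro rfl; exact hne (hi ▸ rfl))).ne h
        · intro h
          have hlt := T.parent_lt i hi
          rw [h] at hlt
          exact absurd (hlt.trans hij') (lt_irrefl j)
      simp [hL, hne, hpar]
    rw [Matrix.det_of_lowerTriangular L htri]
    simp [hL]
  have hLDL : (x • (1 : Matrix (Fin (n+1)) (Fin (n+1)) ℝ)) - T.adjMat ℝ
      = L.transpose * (Matrix.diagonal g * L) := by
    ext i j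
    rw [Matrix.mul_apply]
    have hterm : ∀ w, L.transpose i w * (Matrix.diagonal g * L) w j = L w i * (g w * L w j) := by
      intro w
      rw [Matrix.transpose_apply, Matrix.diagonal_mul]
    simp only [hterm]
    by_cases hij : i = j
    · subst hij
      have hsupp : ∀ w ∈ Finset.univ, w ∉ insert i (T.children i) → L w i * (g w * L w i) = 0 := by
        intro w _ hw
        simp only [Finset.mem_insert, mem_children] at hw
        push_neg at hw
        have : L w i = 0 := by
          rw [hL]
          simp only [Matrix.of_apply]
          rw [if_neg hw.1, if_neg]
          intro h
          exact hw.1 (hw.2 h)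
        rw [this]; ring
      rw [← Finset.sum_subset (Finset.subset_univ _) hsupp]
      rw [Finset.sum_insert (by rw [mem_children]; tauto)]
      have hLii : L i i = 1 := by simp [hL]
      have hchild_term : ∀ w ∈ T.children i, L w i * (g w * L w i) = (g w)⁻¹ := by
        intro w hw
        rw [mem_children] at hw
        have hLwi : L w i = -(g w)⁻¹ := by
          rw [hL]; simp only [Matrix.of_apply]; rw [if_neg hw.2, if_pos hw.1]
        rw [hLwi]
        field_simp
      rw [Finset.sum_congr rfl hchild_term, hLii]
      have := hgeq i
      simp only [Matrix.sub_apply, Matrix.smul_apply, Matrix.one_apply_eq, smul_eq_mul, mul_one]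
      rw [ParentTree.adjMat]
      simp only [Matrix.of_apply]
      rw [if_neg (by simp)]
      linarith [this]
    · -- off-diagonal
      have hsupp : ∀ w ∈ Finset.univ, w ∉ ({i, j} : Finset (Fin (n+1))) → L w i * (g w * L w j) = 0 := by
        intro w _ hw
        simp only [Finset.mem_insert, Finset.mem_singleton] at hw
        push_neg at hw
        by_cases h1 : T.parent w = i
        · have : L w j = 0 := by
            rw [hL]; simp only [Matrix.of_apply]
            rw [if_neg hw.2, if_neg (by rw [h1]; exact hij)]
          rw [this]; ring
        · have : L w i = 0 := by
            rw [hL]; simp only [Matrix.of_apply]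
            rw [if_neg hw.1, if_neg h1]
          rw [this]; ring
      rw [← Finset.sum_subset (Finset.subset_univ _) hsupp]
      rw [Finset.sum_pair hij]
      have hLii : L i i = 1 := by simp [hL]
      have hLjj : L j j = 1 := by simp [hL]
      have hnotboth : ¬ (T.parent i = j ∧ T.parent j = i) := by
        rintro ⟨h1, h2⟩
        by_cases hi : i = 0
        · rw [hi, T.parent_zero] at h1; exact hij (hi.trans h1)
        · by_cases hj : j = 0
          · rw [hj, T.parent_zero] at h2; exact hij (h2.symm.trans hj.symm)
          · have l1 := T.parent_lt i hi
            have l2 := T.parent_lt j hj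
            rw [h1] at l1; rw [h2] at l2
            exact absurd (l1.trans l2) (lt_irrefl j)
      have hfi : L i i * (g i * L i j) = if T.parent i = j then -1 else 0 := by
        rw [hLii, one_mul, hL]
        simp only [Matrix.of_apply]
        rw [if_neg hij]
        by_cases hp : T.parent i = j
        · rw [if_pos hp, if_pos hp, mul_neg, mul_inv_cancel₀ (hgne i)]
        · rw [if_neg hp, if_neg hp, mul_zero]
      have hfj : L j i * (g j * L j j) = if T.parent j = i then -1 else 0 := by
        rw [hLjj, mul_one, hL]
        simp only [Matrix.of_apply]
        rw [if_neg (Ne.symm hij)]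
        by_cases hp : T.parent j = i
        · rw [if_pos hp, if_pos hp, neg_mul, inv_mul_cancel₀ (hgne j)]
        · rw [if_neg hp, if_neg hp, zero_mul]
      rw [hfi, hfj]
      simp only [Matrix.sub_apply, Matrix.smul_apply, Matrix.one_apply_ne hij, smul_eq_mul,
        mul_zero, zero_sub]
      rw [ParentTree.adjMat]
      simp only [Matrix.of_apply]
      by_cases hp1 : T.parent i = j
      · have hp2 : T.parent j ≠ i := fun h => hnotboth ⟨hp1, h⟩
        rw [if_pos hp1, if_neg hp2, if_pos ⟨hij, Or.inl hp1⟩]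
        ring
      · by_cases hp2 : T.parent j = i
        · rw [if_neg hp1, if_pos hp2, if_pos ⟨hij, Or.inr hp2⟩]
          ring
        · rw [if_neg hp1, if_neg hp2, if_neg (by tauto)]
          ring
  -- determinant computation
  rw [hLDL, Matrix.det_mul, Matrix.det_mul, Matrix.det_transpose, hLdet, one_mul,
    Matrix.det_diagonal]
  -- product of g = A k
  have hD : ∀ v, (A (ht v))^(c+2) = ∏ w ∈ T.children v, A (ht w + 1) := by
    intro v
    rcases eq_or_lt_of_le (hle v) with hv | hv
    · have hc : T.children v = ∅ := Finset.card_eq_zero.1 (hleaf v hv)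
      have hhtv : ht v = 0 := by simp only [hht]; omega
      rw [hc, Finset.prod_empty, hhtv, hA0, one_pow]
    · have hcard : (T.children v).card = c + 2 := hbethe v hv
      have : ∀ w ∈ T.children v, A (ht w + 1) = A (ht v) := by
        intro w hw
        have := hchild_lvl v w hw
        have h1 : ht w + 1 = ht v := by simp only [hht]; omega
        rw [h1]
      rw [Finset.prod_congr rfl this, Finset.prod_const, hcard]
  have hfiber : ∀ j : Fin (n+1), (Finset.univ.erase 0).filter (fun w => T.parent w = j) = T.children j := by
    intro j
    ext w
    constructor
    · intro hw
      rw [Finset.mem_filter, Finset.mem_erase] at hw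
      obtain ⟨⟨hw0, -⟩, hp⟩ := hw
      rw [mem_children]
      refine ⟨hp, fun hwj => ?_⟩
      have hlt := T.parent_lt w hw0
      rw [hp, hwj] at hlt
      exact absurd hlt (lt_irrefl j)
    · intro hw
      rw [mem_children] at hw
      obtain ⟨hp, hwj⟩ := hw
      rw [Finset.mem_filter, Finset.mem_erase]
      refine ⟨⟨fun hw0 => ?_, Finset.mem_univ w⟩, hp⟩
      rw [hw0] at hp
      rw [T.parent_zero] at hp
      exact hwj (hw0.trans hp)
  have hprodD : ∏ v : Fin (n+1), (A (ht v))^(c+2) = ∏ w ∈ Finset.univ.erase 0, A (ht w + 1) := by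
    have := Finset.prod_fiberwise_of_maps_to (g := T.parent) (t := Finset.univ)
      (s := Finset.univ.erase 0) (fun i _ => Finset.mem_univ _) (fun w => A (ht w + 1))
    rw [← this]
    apply Finset.prod_congr rfl
    intro v _
    rw [hfiber v, hD v]
  have hprodN : ∏ v : Fin (n+1), A (ht v + 1)
      = A k * ∏ w ∈ Finset.univ.erase 0, A (ht w + 1) := by
    rw [← Finset.mul_prod_erase Finset.univ _ (Finset.mem_univ 0)]
    congr 2
    simp only [hht, hlvl0]
    omega
  have hprodg : ∏ v : Fin (n+1), g v = A k := by
    rw [hg]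
    simp only
    rw [Finset.prod_div_distrib, hprodD, hprodN]
    rw [mul_div_assoc, div_self, mul_one]
    apply Finset.prod_ne_zero_iff.2
    intro w _
    exact hAne _ (hht_le w)
  rw [hprodg, mul_one]

end Charpoly
lemma eval_charpoly' {m : ℕ} (M : Matrix (Fin m) (Fin m) ℝ) (x : ℝ) :
    M.charpoly.eval x = ((x • (1 : Matrix (Fin m) (Fin m) ℝ)) - M).det := by
  rw [Matrix.charpoly]
  have h1 : (Polynomial.evalRingHom x) (M.charmatrix).det
      = ((M.charmatrix).map (Polynomial.evalRingHom x)).det := RingHom.map_det _ _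
  have h2 : (M.charmatrix).map (Polynomial.evalRingHom x)
      = (x • (1 : Matrix (Fin m) (Fin m) ℝ)) - M := by
    ext i j
    by_cases hij : i = j
    · subst hij
      simp [Matrix.charmatrix_apply_eq, Matrix.map_apply]
    · simp [Matrix.charmatrix_apply_ne _ _ _ hij, Matrix.map_apply, Matrix.one_apply_ne hij,
        Matrix.sub_apply, Matrix.smul_apply, hij]
  rw [← h2, ← h1]
  rfl

lemma poly_eq_of_eval_eq (p q : ℝ[X]) (k : ℕ) (r : ℕ → ℝ[X]) (hr : ∀ j, r j ≠ 0)
    (h : ∀ x : ℝ, (∀ j, j ≤ k → (r j).eval x ≠ 0) → p.eval x = q.eval x) : p = q := by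
  apply Polynomial.eq_of_infinite_eval_eq
  have hfin : (⋃ j ∈ Finset.range (k+1), {x : ℝ | (r j).IsRoot x}).Finite :=
    Set.Finite.biUnion (Finset.range (k+1)).finite_toSet
      (fun j _ => Polynomial.finite_setOf_isRoot (hr j))
  apply Set.Infinite.mono _ hfin.infinite_compl
  intro x hx
  simp only [Set.mem_compl_iff, Set.mem_iUnion, not_exists] at hx
  refine h x fun j hj => fun h0 => ?_
  exact hx j (Finset.mem_range.2 (by omega)) h0


lemma telescope (u : ℕ → ℝ) (hu : u 1 = 0) (r : ℝ) : ∀ m : ℕ,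
    u (m+1) + ∑ i ∈ Finset.Icc 1 m, (r-1) * r^(m-i) * u i
      = ∑ j ∈ Finset.Icc 1 m, (u (j+1) - u j) * r^(m-j) := by
  intro m
  induction m with
  | zero => simpa using hu
  | succ m ih =>
    rw [Finset.sum_Icc_succ_top (by omega : 1 ≤ m+1), Finset.sum_Icc_succ_top (by omega : 1 ≤ m+1)]
    have hL : ∀ i ∈ Finset.Icc 1 m, (r-1) * r^(m+1-i) * u i = r * ((r-1) * r^(m-i) * u i) := by
      intro i hi
      rw [Finset.mem_Icc] at hi
      rw [show m+1-i = (m-i)+1 by omega, pow_succ]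
      ring
    have hR : ∀ j ∈ Finset.Icc 1 m, (u (j+1) - u j) * r^(m+1-j) = r * ((u (j+1) - u j) * r^(m-j)) := by
      intro j hj
      rw [Finset.mem_Icc] at hj
      rw [show m+1-j = (m-j)+1 by omega, pow_succ]
      ring
    rw [Finset.sum_congr rfl hL, Finset.sum_congr rfl hR, ← Finset.mul_sum, ← Finset.mul_sum]
    have expand : r * (∑ j ∈ Finset.Icc 1 m, (u (j+1) - u j) * r^(m-j))
        = r * (u (m+1) + ∑ i ∈ Finset.Icc 1 m, (r-1) * r^(m-i) * u i) := by
      rw [← ih]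
    rw [expand]
    simp only [Nat.sub_self, pow_zero]
    ring

lemma energy_eP (c j : ℕ) :
    (((eP c j).roots).map (fun x => |x|)).sum = 2 * Real.sqrt ((c:ℝ)+2) * Sc j := by
  rw [eP_roots, Multiset.map_map]
  have : ((Finset.Icc 1 j).val.map (fun h => |rootF c j h|)).sum
      = ∑ h ∈ Finset.Icc 1 j, |rootF c j h| := rfl
  rw [Function.comp_def, this]
  unfold Sc rootF
  rw [Finset.mul_sum]
  apply Finset.sum_congr rfl
  intro h _
  rw [mul_div_assoc, abs_mul, abs_of_nonneg (by positivity : (0:ℝ) ≤ 2 * Real.sqrt ((c:ℝ)+2))]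

end B14
end B14aux


set_option maxHeartbeats 1000000 in
theorem stmt_14 {n : ℕ} (T : ParentTree n)
    (lvl : Fin (n + 1) → ℕ)
    (hlvl0 : lvl 0 = 1)
    (hlvl : ∀ v, v ≠ 0 → lvl v = lvl (T.parent v) + 1)
    (d k : ℕ) (hd : 3 ≤ d) (hk : 1 ≤ k)
    (hle : ∀ v, lvl v ≤ k)
    (hbethe : ∀ v, lvl v < k → (T.children v).card = d - 1)
    (hleaf : ∀ v, lvl v = k → (T.children v).card = 0) :
    (((T.adjMat ℝ).charpoly).roots.map (fun x => |x|)).sum =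
      ∑ j ∈ Finset.Icc 1 (k - 1),
        (if Odd j then
            2 * (Real.sin (Real.pi / (2 * j + 4)))⁻¹ - 2 * Real.cot (Real.pi / (2 * j + 2))
          else
            2 * Real.cot (Real.pi / (2 * j + 4)) - 2 * (Real.sin (Real.pi / (2 * j + 2)))⁻¹)
          * ((d : ℝ) - 1) ^ ((k : ℝ) - 1 / 2 - (j : ℝ)) := by
  classical
  obtain ⟨c, rfl⟩ : ∃ c, d = c + 3 := ⟨d - 3, by omega⟩
  obtain ⟨k', rfl⟩ : ∃ k', k = k' + 1 := ⟨k - 1, by omega⟩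
  have hbethe' : ∀ v, lvl v < k'+1 → (T.children v).card = c + 2 := by
    intro v hv
    have := hbethe v hv
    omega
  have haPne : ∀ j, B14.aP c j ≠ 0 := fun j => (B14.aP_monic c j (B14.eP_monic c)).ne_zero
  have hcp : (T.adjMat ℝ).charpoly = B14.aP c (k'+1) :=
    B14.poly_eq_of_eval_eq _ _ (k'+1) (B14.aP c) haPne (fun x hx => by
      rw [B14.eval_charpoly',
        B14.charpoly_det_eq T lvl hlvl0 hlvl c (k'+1) hk hle hbethe' hleaf x hx])
  simp only [Nat.add_sub_cancel]
  rw [hcp, B14.aP_factor]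
  set b : ℝ := Real.sqrt ((c:ℝ)+2) with hb
  set mm : ℕ → ℕ := fun i => (c+1)*(c+2)^(k'-i) with hmm
  have hq_ne : (∏ i ∈ Finset.Icc 1 k', B14.eP c i ^ (mm i)) ≠ 0 := by
    apply Finset.prod_ne_zero_iff.2
    intro i _
    exact pow_ne_zero _ (B14.eP_monic c i).ne_zero
  rw [Polynomial.roots_mul (mul_ne_zero (B14.eP_monic c (k'+1)).ne_zero hq_ne),
    Polynomial.roots_prod _ _ hq_ne,
    Multiset.map_add, Multiset.sum_add, Multiset.map_bind, Multiset.sum_bind]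
  have hterm : ∀ i, (((B14.eP c i ^ (mm i)).roots).map (fun x => |x|)).sum
      = (mm i : ℝ) * (2 * b * B14.Sc i) := by
    intro i
    rw [Polynomial.roots_pow, Multiset.map_nsmul, Multiset.sum_nsmul, B14.energy_eP,
      nsmul_eq_mul, hb]
  have hmsum : ((Finset.Icc 1 k').val.map
        (fun i => (((B14.eP c i ^ (mm i)).roots).map (fun x => |x|)).sum)).sum
      = ∑ i ∈ Finset.Icc 1 k', (mm i : ℝ) * (2 * b * B14.Sc i) := by
    have h0 : ((Finset.Icc 1 k').val.map
        (fun i => (((B14.eP c i ^ (mm i)).roots).map (fun x => |x|)).sum)).sum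
        = ∑ i ∈ Finset.Icc 1 k',
            (((B14.eP c i ^ (mm i)).roots).map (fun x => |x|)).sum := rfl
    rw [h0]
    exact Finset.sum_congr rfl fun i _ => hterm i
  rw [hmsum, B14.energy_eP]
  -- now LHS = 2 * b * Sc (k'+1) + ∑ i, (mm i) * (2 b Sc i)
  set u : ℕ → ℝ := fun j => 2 * b * B14.Sc j with hu
  have hu1 : u 1 = 0 := by
    simp only [hu]
    rw [B14.Sc_one, mul_zero]
  have htel := B14.telescope u hu1 ((c:ℝ)+2) k'
  have hLHSm : ∀ i ∈ Finset.Icc 1 k', (mm i : ℝ) * (2 * b * B14.Sc i)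
      = (((c:ℝ)+2)-1) * ((c:ℝ)+2)^(k'-i) * u i := by
    intro i _
    simp only [hmm, hu]
    push_cast
    ring
  rw [show (2 * b * B14.Sc (k'+1)) = u (k'+1) from rfl,
    Finset.sum_congr rfl hLHSm, htel]
  -- RHS
  apply Finset.sum_congr rfl
  intro j hj
  rw [Finset.mem_Icc] at hj
  have hj1 : 1 ≤ j := hj.1
  -- power factor
  have hbase : ((c+3 : ℕ) : ℝ) - 1 = (c:ℝ) + 2 := by push_cast; ring
  have hexp : ((k'+1 : ℕ) : ℝ) - 1/2 - (j:ℝ) = ((k'-j : ℕ) : ℝ) + 1/2 := by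
    have : ((k'-j : ℕ) : ℝ) = (k':ℝ) - (j:ℝ) := by
      rw [Nat.cast_sub hj.2]
    rw [this]
    push_cast
    ring
  have hpow : ((c+3 : ℕ) : ℝ) - 1 = (c:ℝ)+2 := hbase
  have hrpow : (((c+3:ℕ):ℝ) - 1) ^ (((k'+1 : ℕ):ℝ) - 1/2 - (j:ℝ))
      = ((c:ℝ)+2)^(k'-j) * b := by
    rw [hbase, hexp, Real.rpow_add (by positivity), Real.rpow_natCast, hb,
      Real.sqrt_eq_rpow]
  -- trig factor
  have hSj := B14.Sc_closed j hj1
  have hSj1 := B14.Sc_closed (j+1) (by omega)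
  have harg : Real.pi / (2*((j+1 : ℕ):ℝ)+2) = Real.pi / (2*(j:ℝ)+4) := by
    push_cast; ring_nf
  rw [harg] at hSj1
  simp only [Nat.odd_add_one] at hSj1
  have htrig : (if Odd j then
        2 * (Real.sin (Real.pi / (2 * (j:ℝ) + 4)))⁻¹ - 2 * Real.cot (Real.pi / (2 * (j:ℝ) + 2))
      else
        2 * Real.cot (Real.pi / (2 * (j:ℝ) + 4)) - 2 * (Real.sin (Real.pi / (2 * (j:ℝ) + 2)))⁻¹)
      = 2 * B14.Sc (j+1) - 2 * B14.Sc j := by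
    by_cases hoj : Odd j
    · rw [if_pos hoj, hSj, hSj1, if_pos hoj, if_neg (fun h => h hoj)]
      ring
    · rw [if_neg hoj, hSj, hSj1, if_neg hoj, if_pos hoj]
      ring
  rw [hrpow, htrig]
  simp only [hu]
  ring
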